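/- Fubini theorem for coends (Type-valued): for a functor F : (C × D)ᵒᵖ × (C × D) ⥤ Type, the three objects ∫^{c ∈ C} ∫^{d ∈ D} F(c,d,c,d), ∫^{(c,d) ∈ C × D} F(c,d,c,d), and ∫^{d ∈ D} ∫^{c ∈ C} F(c,d,c,d) exist and are canonically isomorphic, compatibly with the coprojections. -/

import Mathlib

open CategoryTheory Opposite

universe u

variable {C D : Type u} [SmallCategory C] [SmallCategory D]

/-- A morphism in the product category `C × D` given by a pair of morphisms. -/
def pmor {c c' : C} {d d' : D} (f : c ⟶ c') (k : d ⟶ d') :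
    ((c, d) : C × D) ⟶ ((c', d') : C × D) := (f, k)

/-- The opposite of a morphism in `C × D`. -/
def pop {X Y : C × D} (f : X ⟶ Y) : op Y ⟶ op X := f.op

/-- The `D`-balancing relation computing, for fixed `c, c' : C`, the coend
`∫^d F (c, d, c', d)` as a quotient of `Σ d, F (c, d, c', d)`. -/
def dRel (F : (C × D)ᵒᵖ × (C × D) ⥤ Type u) (c c' : C) :
    (Σ d : D, F.obj (op (c, d), (c', d))) →
      (Σ d : D, F.obj (op (c, d), (c', d))) → Prop :=
  fun X Y => ∃ (d d' : D) (k : d ⟶ d') (z : F.obj (op (c, d'), (c', d))),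
    X = ⟨d, F.map ((pop (pmor (𝟙 c) k), 𝟙 ((c', d) : C × D)) :
        ((op (c, d'), (c', d)) : (C × D)ᵒᵖ × (C × D)) ⟶ (op (c, d), (c', d))) z⟩ ∧
    Y = ⟨d', F.map ((𝟙 (op ((c, d') : C × D)), pmor (𝟙 c') k) :
        ((op (c, d'), (c', d)) : (C × D)ᵒᵖ × (C × D)) ⟶ (op (c, d'), (c', d'))) z⟩

/-- The inner coend `∫^d F (c, d, c', d)`, for fixed `c, c' : C`. -/
def InnerD (F : (C × D)ᵒᵖ × (C × D) ⥤ Type u) (c c' : C) : Type u :=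
  Quot (dRel F c c')

/-- Functoriality of the inner coend `∫^d F (c, d, c', d)` in `c` (contravariantly) and
in `c'` (covariantly). -/
def InnerD.map (F : (C × D)ᵒᵖ × (C × D) ⥤ Type u) {c₁ c₂ c₁' c₂' : C}
    (f : c₂ ⟶ c₁) (g : c₁' ⟶ c₂') : InnerD F c₁ c₁' → InnerD F c₂ c₂' :=
  Quot.lift
    (fun X => Quot.mk (dRel F c₂ c₂')
      ⟨X.1, F.map ((pop (pmor f (𝟙 X.1)), pmor g (𝟙 X.1)) :
        ((op (c₁, X.1), (c₁', X.1)) : (C × D)ᵒᵖ × (C × D)) ⟶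
          (op (c₂, X.1), (c₂', X.1))) X.2⟩)
    (by
      rintro _ _ ⟨d, d', k, z, rfl, rfl⟩
      dsimp only
      have h₁ : F.map ((pop (pmor f (𝟙 d)), pmor g (𝟙 d)) :
            ((op (c₁, d), (c₁', d)) : (C × D)ᵒᵖ × (C × D)) ⟶ (op (c₂, d), (c₂', d)))
          (F.map ((pop (pmor (𝟙 c₁) k), 𝟙 ((c₁', d) : C × D)) :
            ((op (c₁, d'), (c₁', d)) : (C × D)ᵒᵖ × (C × D)) ⟶ (op (c₁, d), (c₁', d))) z) =
          F.map ((pop (pmor (𝟙 c₂) k), 𝟙 ((c₂', d) : C × D)) :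
            ((op (c₂, d'), (c₂', d)) : (C × D)ᵒᵖ × (C × D)) ⟶ (op (c₂, d), (c₂', d)))
          (F.map ((pop (pmor f (𝟙 d')), pmor g (𝟙 d)) :
            ((op (c₁, d'), (c₁', d)) : (C × D)ᵒᵖ × (C × D)) ⟶ (op (c₂, d'), (c₂', d))) z) := by
        rw [← FunctorToTypes.map_comp_apply, ← FunctorToTypes.map_comp_apply]
        refine congrArg (fun m => F.map m z) ?_
        apply CategoryTheory.Prod.hom_ext
        · apply Quiver.Hom.unop_inj
          apply CategoryTheory.Prod.hom_ext <;> simp [pop, pmor]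
        · apply CategoryTheory.Prod.hom_ext <;> simp [pop, pmor]
      have h₂ : F.map ((pop (pmor f (𝟙 d')), pmor g (𝟙 d')) :
            ((op (c₁, d'), (c₁', d')) : (C × D)ᵒᵖ × (C × D)) ⟶ (op (c₂, d'), (c₂', d')))
          (F.map ((𝟙 (op ((c₁, d') : C × D)), pmor (𝟙 c₁') k) :
            ((op (c₁, d'), (c₁', d)) : (C × D)ᵒᵖ × (C × D)) ⟶ (op (c₁, d'), (c₁', d'))) z) =
          F.map ((𝟙 (op ((c₂, d') : C × D)), pmor (𝟙 c₂') k) :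
            ((op (c₂, d'), (c₂', d)) : (C × D)ᵒᵖ × (C × D)) ⟶ (op (c₂, d'), (c₂', d')))
          (F.map ((pop (pmor f (𝟙 d')), pmor g (𝟙 d)) :
            ((op (c₁, d'), (c₁', d)) : (C × D)ᵒᵖ × (C × D)) ⟶ (op (c₂, d'), (c₂', d))) z) := by
        rw [← FunctorToTypes.map_comp_apply, ← FunctorToTypes.map_comp_apply]
        refine congrArg (fun m => F.map m z) ?_
        apply CategoryTheory.Prod.hom_ext
        · apply Quiver.Hom.unop_inj
          apply CategoryTheory.Prod.hom_ext <;> simp [pop, pmor]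
        · apply CategoryTheory.Prod.hom_ext <;> simp [pop, pmor]
      rw [h₁, h₂]
      exact Quot.sound ⟨d, d', k, _, rfl, rfl⟩)

/-- The outer `C`-balancing relation computing the iterated coend
`∫^c ∫^d F (c, d, c, d)`. -/
def cdRel (F : (C × D)ᵒᵖ × (C × D) ⥤ Type u) :
    (Σ c : C, InnerD F c c) → (Σ c : C, InnerD F c c) → Prop :=
  fun X Y => ∃ (c c' : C) (f : c ⟶ c') (t : InnerD F c' c),
    X = ⟨c', InnerD.map F (𝟙 c') f t⟩ ∧ Y = ⟨c, InnerD.map F f (𝟙 c) t⟩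

/-- The `C`-balancing relation computing, for fixed `d, d' : D`, the coend
`∫^c F (c, d, c, d')`. -/
def cRel (F : (C × D)ᵒᵖ × (C × D) ⥤ Type u) (d d' : D) :
    (Σ c : C, F.obj (op (c, d), (c, d'))) →
      (Σ c : C, F.obj (op (c, d), (c, d'))) → Prop :=
  fun X Y => ∃ (c c' : C) (f : c ⟶ c') (z : F.obj (op (c', d), (c, d'))),
    X = ⟨c, F.map ((pop (pmor f (𝟙 d)), 𝟙 ((c, d') : C × D)) :
        ((op (c', d), (c, d')) : (C × D)ᵒᵖ × (C × D)) ⟶ (op (c, d), (c, d'))) z⟩ ∧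
    Y = ⟨c', F.map ((𝟙 (op ((c', d) : C × D)), pmor f (𝟙 d')) :
        ((op (c', d), (c, d')) : (C × D)ᵒᵖ × (C × D)) ⟶ (op (c', d), (c', d'))) z⟩

/-- The inner coend `∫^c F (c, d, c, d')`, for fixed `d, d' : D`. -/
def InnerC (F : (C × D)ᵒᵖ × (C × D) ⥤ Type u) (d d' : D) : Type u :=
  Quot (cRel F d d')

/-- Functoriality of the inner coend `∫^c F (c, d, c, d')` in `d` (contravariantly) and
in `d'` (covariantly). -/
def InnerC.map (F : (C × D)ᵒᵖ × (C × D) ⥤ Type u) {d₁ d₂ d₁' d₂' : D}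
    (k : d₂ ⟶ d₁) (l : d₁' ⟶ d₂') : InnerC F d₁ d₁' → InnerC F d₂ d₂' :=
  Quot.lift
    (fun X => Quot.mk (cRel F d₂ d₂')
      ⟨X.1, F.map ((pop (pmor (𝟙 X.1) k), pmor (𝟙 X.1) l) :
        ((op (X.1, d₁), (X.1, d₁')) : (C × D)ᵒᵖ × (C × D)) ⟶
          (op (X.1, d₂), (X.1, d₂'))) X.2⟩)
    (by
      rintro _ _ ⟨c, c', f, z, rfl, rfl⟩
      dsimp only
      have h₁ : F.map ((pop (pmor (𝟙 c) k), pmor (𝟙 c) l) :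
            ((op (c, d₁), (c, d₁')) : (C × D)ᵒᵖ × (C × D)) ⟶ (op (c, d₂), (c, d₂')))
          (F.map ((pop (pmor f (𝟙 d₁)), 𝟙 ((c, d₁') : C × D)) :
            ((op (c', d₁), (c, d₁')) : (C × D)ᵒᵖ × (C × D)) ⟶ (op (c, d₁), (c, d₁'))) z) =
          F.map ((pop (pmor f (𝟙 d₂)), 𝟙 ((c, d₂') : C × D)) :
            ((op (c', d₂), (c, d₂')) : (C × D)ᵒᵖ × (C × D)) ⟶ (op (c, d₂), (c, d₂')))
          (F.map ((pop (pmor (𝟙 c') k), pmor (𝟙 c) l) :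
            ((op (c', d₁), (c, d₁')) : (C × D)ᵒᵖ × (C × D)) ⟶ (op (c', d₂), (c, d₂'))) z) := by
        rw [← FunctorToTypes.map_comp_apply, ← FunctorToTypes.map_comp_apply]
        refine congrArg (fun m => F.map m z) ?_
        apply CategoryTheory.Prod.hom_ext
        · apply Quiver.Hom.unop_inj
          apply CategoryTheory.Prod.hom_ext <;> simp [pop, pmor]
        · apply CategoryTheory.Prod.hom_ext <;> simp [pop, pmor]
      have h₂ : F.map ((pop (pmor (𝟙 c') k), pmor (𝟙 c') l) :
            ((op (c', d₁), (c', d₁')) : (C × D)ᵒᵖ × (C × D)) ⟶ (op (c', d₂), (c', d₂')))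
          (F.map ((𝟙 (op ((c', d₁) : C × D)), pmor f (𝟙 d₁')) :
            ((op (c', d₁), (c, d₁')) : (C × D)ᵒᵖ × (C × D)) ⟶ (op (c', d₁), (c', d₁'))) z) =
          F.map ((𝟙 (op ((c', d₂) : C × D)), pmor f (𝟙 d₂')) :
            ((op (c', d₂), (c, d₂')) : (C × D)ᵒᵖ × (C × D)) ⟶ (op (c', d₂), (c', d₂')))
          (F.map ((pop (pmor (𝟙 c') k), pmor (𝟙 c) l) :
            ((op (c', d₁), (c, d₁')) : (C × D)ᵒᵖ × (C × D)) ⟶ (op (c', d₂), (c, d₂'))) z) := by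
        rw [← FunctorToTypes.map_comp_apply, ← FunctorToTypes.map_comp_apply]
        refine congrArg (fun m => F.map m z) ?_
        apply CategoryTheory.Prod.hom_ext
        · apply Quiver.Hom.unop_inj
          apply CategoryTheory.Prod.hom_ext <;> simp [pop, pmor]
        · apply CategoryTheory.Prod.hom_ext <;> simp [pop, pmor]
      rw [h₁, h₂]
      exact Quot.sound ⟨c, c', f, _, rfl, rfl⟩)

/-- The outer `D`-balancing relation computing the iterated coend
`∫^d ∫^c F (c, d, c, d)`. -/
def dcRel (F : (C × D)ᵒᵖ × (C × D) ⥤ Type u) :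
    (Σ d : D, InnerC F d d) → (Σ d : D, InnerC F d d) → Prop :=
  fun X Y => ∃ (d d' : D) (k : d ⟶ d') (t : InnerC F d' d),
    X = ⟨d', InnerC.map F (𝟙 d') k t⟩ ∧ Y = ⟨d, InnerC.map F k (𝟙 d) t⟩

/-- The balancing relation for morphisms of the product category `C × D`, computing the
total coend `∫^{(c, d)} F (c, d, c, d)`. -/
def totRel (F : (C × D)ᵒᵖ × (C × D) ⥤ Type u) :
    (Σ p : C × D, F.obj (op p, p)) → (Σ p : C × D, F.obj (op p, p)) → Prop :=
  fun X Y => ∃ (p p' : C × D) (f : p ⟶ p') (z : F.obj (op p', p)),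
    X = ⟨p', F.map ((𝟙 (op p'), f) : ((op p', p) : (C × D)ᵒᵖ × (C × D)) ⟶ (op p', p')) z⟩ ∧
    Y = ⟨p, F.map ((pop f, 𝟙 p) : ((op p', p) : (C × D)ᵒᵖ × (C × D)) ⟶ (op p, p)) z⟩

section FubiniAux

variable (F : (C × D)ᵒᵖ × (C × D) ⥤ Type u)

/-- The comparison map from the total coend to the iterated coend `∫^c ∫^d`. -/
def toCD : Quot (totRel F) → Quot (cdRel F) :=
  Quot.lift
    (fun X => Quot.mk (cdRel F) ⟨X.1.1, Quot.mk (dRel F X.1.1 X.1.1) ⟨X.1.2, X.2⟩⟩)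
    (by
      rintro _ _ ⟨⟨c, d⟩, ⟨c', d'⟩, ⟨f₁, k⟩, z, rfl, rfl⟩
      dsimp only
      have h1 : F.map ((𝟙 (op ((c', d') : C × D)), ((f₁, k) : ((c, d) : C × D) ⟶ (c', d'))) :
            ((op (c', d'), (c, d)) : (C × D)ᵒᵖ × (C × D)) ⟶ (op (c', d'), (c', d'))) z =
          F.map ((pop (pmor (𝟙 c') (𝟙 d')), pmor f₁ (𝟙 d')) :
            ((op (c', d'), (c, d')) : (C × D)ᵒᵖ × (C × D)) ⟶ (op (c', d'), (c', d')))
          (F.map ((𝟙 (op ((c', d') : C × D)), pmor (𝟙 c) k) :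
            ((op (c', d'), (c, d)) : (C × D)ᵒᵖ × (C × D)) ⟶ (op (c', d'), (c, d'))) z) := by
        rw [← FunctorToTypes.map_comp_apply]
        refine congrArg (fun m => F.map m z) ?_
        apply CategoryTheory.Prod.hom_ext
        · apply Quiver.Hom.unop_inj
          apply CategoryTheory.Prod.hom_ext <;> simp [pop, pmor]
        · apply CategoryTheory.Prod.hom_ext <;> simp [pop, pmor]
      have h2 : F.map ((pop ((f₁, k) : ((c, d) : C × D) ⟶ (c', d')), 𝟙 ((c, d) : C × D)) :
            ((op (c', d'), (c, d)) : (C × D)ᵒᵖ × (C × D)) ⟶ (op (c, d), (c, d))) z =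
          F.map ((pop (pmor f₁ (𝟙 d)), pmor (𝟙 c) (𝟙 d)) :
            ((op (c', d), (c, d)) : (C × D)ᵒᵖ × (C × D)) ⟶ (op (c, d), (c, d)))
          (F.map ((pop (pmor (𝟙 c') k), 𝟙 ((c, d) : C × D)) :
            ((op (c', d'), (c, d)) : (C × D)ᵒᵖ × (C × D)) ⟶ (op (c', d), (c, d))) z) := by
        rw [← FunctorToTypes.map_comp_apply]
        refine congrArg (fun m => F.map m z) ?_
        apply CategoryTheory.Prod.hom_ext
        · apply Quiver.Hom.unop_inj
          apply CategoryTheory.Prod.hom_ext <;> simp [pop, pmor]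
        · apply CategoryTheory.Prod.hom_ext <;> simp [pop, pmor]
      rw [h1, h2]
      have hAB : Quot.mk (dRel F c' c)
            ⟨d, F.map ((pop (pmor (𝟙 c') k), 𝟙 ((c, d) : C × D)) :
              ((op (c', d'), (c, d)) : (C × D)ᵒᵖ × (C × D)) ⟶ (op (c', d), (c, d))) z⟩ =
          Quot.mk (dRel F c' c)
            ⟨d', F.map ((𝟙 (op ((c', d') : C × D)), pmor (𝟙 c) k) :
              ((op (c', d'), (c, d)) : (C × D)ᵒᵖ × (C × D)) ⟶ (op (c', d'), (c, d'))) z⟩ :=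
        Quot.sound ⟨d, d', k, z, rfl, rfl⟩
      exact ((congrArg (fun t => Quot.mk (cdRel F) ⟨c', InnerD.map F (𝟙 c') f₁ t⟩)
        hAB.symm).trans
        (Quot.sound ⟨c, c', f₁, Quot.mk (dRel F c' c)
          ⟨d, F.map ((pop (pmor (𝟙 c') k), 𝟙 ((c, d) : C × D)) :
            ((op (c', d'), (c, d)) : (C × D)ᵒᵖ × (C × D)) ⟶ (op (c', d), (c, d))) z⟩,
          rfl, rfl⟩)))

/-- The coprojection from the inner coend into the total coend. -/
def innerDToTot (c : C) : InnerD F c c → Quot (totRel F) :=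
  Quot.lift (fun Y => Quot.mk (totRel F) ⟨(c, Y.1), Y.2⟩)
    (by
      rintro _ _ ⟨d, d', k, z, rfl, rfl⟩
      exact (Quot.sound ⟨(c, d), (c, d'), pmor (𝟙 c) k, z, rfl, rfl⟩).symm)

/-- The inverse comparison map from the iterated coend `∫^c ∫^d` to the total coend. -/
def cdToTot : Quot (cdRel F) → Quot (totRel F) :=
  Quot.lift (fun X => innerDToTot F X.1 X.2)
    (by
      rintro _ _ ⟨c, c', f, t, rfl, rfl⟩
      dsimp only
      induction t using Quot.ind with
      | _ Y =>
        obtain ⟨d, w⟩ := Y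
        exact Quot.sound ⟨(c, d), (c', d), pmor f (𝟙 d), w, rfl, rfl⟩)

/-- The comparison map from the total coend to the iterated coend `∫^d ∫^c`. -/
def toDC : Quot (totRel F) → Quot (dcRel F) :=
  Quot.lift
    (fun X => Quot.mk (dcRel F) ⟨X.1.2, Quot.mk (cRel F X.1.2 X.1.2) ⟨X.1.1, X.2⟩⟩)
    (by
      rintro _ _ ⟨⟨c, d⟩, ⟨c', d'⟩, ⟨f₁, k⟩, z, rfl, rfl⟩
      dsimp only
      have h1 : F.map ((𝟙 (op ((c', d') : C × D)), ((f₁, k) : ((c, d) : C × D) ⟶ (c', d'))) :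
            ((op (c', d'), (c, d)) : (C × D)ᵒᵖ × (C × D)) ⟶ (op (c', d'), (c', d'))) z =
          F.map ((pop (pmor (𝟙 c') (𝟙 d')), pmor (𝟙 c') k) :
            ((op (c', d'), (c', d)) : (C × D)ᵒᵖ × (C × D)) ⟶ (op (c', d'), (c', d')))
          (F.map ((𝟙 (op ((c', d') : C × D)), pmor f₁ (𝟙 d)) :
            ((op (c', d'), (c, d)) : (C × D)ᵒᵖ × (C × D)) ⟶ (op (c', d'), (c', d))) z) := by
        rw [← FunctorToTypes.map_comp_apply]
        refine congrArg (fun m => F.map m z) ?_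
        apply CategoryTheory.Prod.hom_ext
        · apply Quiver.Hom.unop_inj
          apply CategoryTheory.Prod.hom_ext <;> simp [pop, pmor]
        · apply CategoryTheory.Prod.hom_ext <;> simp [pop, pmor]
      have h2 : F.map ((pop ((f₁, k) : ((c, d) : C × D) ⟶ (c', d')), 𝟙 ((c, d) : C × D)) :
            ((op (c', d'), (c, d)) : (C × D)ᵒᵖ × (C × D)) ⟶ (op (c, d), (c, d))) z =
          F.map ((pop (pmor (𝟙 c) k), pmor (𝟙 c) (𝟙 d)) :
            ((op (c, d'), (c, d)) : (C × D)ᵒᵖ × (C × D)) ⟶ (op (c, d), (c, d)))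
          (F.map ((pop (pmor f₁ (𝟙 d')), 𝟙 ((c, d) : C × D)) :
            ((op (c', d'), (c, d)) : (C × D)ᵒᵖ × (C × D)) ⟶ (op (c, d'), (c, d))) z) := by
        rw [← FunctorToTypes.map_comp_apply]
        refine congrArg (fun m => F.map m z) ?_
        apply CategoryTheory.Prod.hom_ext
        · apply Quiver.Hom.unop_inj
          apply CategoryTheory.Prod.hom_ext <;> simp [pop, pmor]
        · apply CategoryTheory.Prod.hom_ext <;> simp [pop, pmor]
      rw [h1, h2]
      have hAB : Quot.mk (cRel F d' d)
            ⟨c, F.map ((pop (pmor f₁ (𝟙 d')), 𝟙 ((c, d) : C × D)) :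
              ((op (c', d'), (c, d)) : (C × D)ᵒᵖ × (C × D)) ⟶ (op (c, d'), (c, d))) z⟩ =
          Quot.mk (cRel F d' d)
            ⟨c', F.map ((𝟙 (op ((c', d') : C × D)), pmor f₁ (𝟙 d)) :
              ((op (c', d'), (c, d)) : (C × D)ᵒᵖ × (C × D)) ⟶ (op (c', d'), (c', d))) z⟩ :=
        Quot.sound ⟨c, c', f₁, z, rfl, rfl⟩
      exact ((congrArg (fun t => Quot.mk (dcRel F) ⟨d', InnerC.map F (𝟙 d') k t⟩)
        hAB.symm).trans
        (Quot.sound ⟨d, d', k, Quot.mk (cRel F d' d)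
          ⟨c, F.map ((pop (pmor f₁ (𝟙 d')), 𝟙 ((c, d) : C × D)) :
            ((op (c', d'), (c, d)) : (C × D)ᵒᵖ × (C × D)) ⟶ (op (c, d'), (c, d))) z⟩,
          rfl, rfl⟩)))

/-- The coprojection from the inner coend into the total coend. -/
def innerCToTot (d : D) : InnerC F d d → Quot (totRel F) :=
  Quot.lift (fun Y => Quot.mk (totRel F) ⟨(Y.1, d), Y.2⟩)
    (by
      rintro _ _ ⟨c, c', f, z, rfl, rfl⟩
      exact (Quot.sound ⟨(c, d), (c', d), pmor f (𝟙 d), z, rfl, rfl⟩).symm)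

/-- The inverse comparison map from the iterated coend `∫^d ∫^c` to the total coend. -/
def dcToTot : Quot (dcRel F) → Quot (totRel F) :=
  Quot.lift (fun X => innerCToTot F X.1 X.2)
    (by
      rintro _ _ ⟨d, d', k, t, rfl, rfl⟩
      dsimp only
      induction t using Quot.ind with
      | _ Y =>
        obtain ⟨c, w⟩ := Y
        exact Quot.sound ⟨(c, d), (c, d'), pmor (𝟙 c) k, w, rfl, rfl⟩)

lemma toCD_cdToTot : ∀ q, toCD F (cdToTot F q) = q := by
  refine Quot.ind fun X => ?_
  obtain ⟨c, t⟩ := X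
  induction t using Quot.ind with
  | _ Y => rfl

lemma cdToTot_toCD : ∀ q, cdToTot F (toCD F q) = q :=
  Quot.ind fun X => rfl

lemma toDC_dcToTot : ∀ q, toDC F (dcToTot F q) = q := by
  refine Quot.ind fun X => ?_
  obtain ⟨d, t⟩ := X
  induction t using Quot.ind with
  | _ Y => rfl

lemma dcToTot_toDC : ∀ q, dcToTot F (toDC F q) = q :=
  Quot.ind fun X => rfl

end FubiniAux
/-- Fubini theorem for coends: the two iterated coends `∫^c ∫^d F (c, d, c, d)` and
`∫^d ∫^c F (c, d, c, d)` and the total coend `∫^{(c, d)} F (c, d, c, d)` all exist and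
are canonically isomorphic, compatibly with the coprojections. -/
theorem stmt_4 (F : (C × D)ᵒᵖ × (C × D) ⥤ Type u) :
    ∃ (φ : Quot (totRel F) → Quot (cdRel F)) (ψ : Quot (totRel F) → Quot (dcRel F)),
      Function.Bijective φ ∧ Function.Bijective ψ ∧
      (∀ (c : C) (d : D) (x : F.obj (op (c, d), (c, d))),
        φ (Quot.mk (totRel F) ⟨(c, d), x⟩) =
          Quot.mk (cdRel F) ⟨c, Quot.mk (dRel F c c) ⟨d, x⟩⟩) ∧
      (∀ (c : C) (d : D) (x : F.obj (op (c, d), (c, d))),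
        ψ (Quot.mk (totRel F) ⟨(c, d), x⟩) =
          Quot.mk (dcRel F) ⟨d, Quot.mk (cRel F d d) ⟨c, x⟩⟩) := by
  exact ⟨toCD F, toDC F,
    Function.bijective_iff_has_inverse.mpr ⟨cdToTot F, cdToTot_toCD F, toCD_cdToTot F⟩,
    Function.bijective_iff_has_inverse.mpr ⟨dcToTot F, dcToTot_toDC F, toDC_dcToTot F⟩,
    fun c d x => rfl, fun c d x => rfl⟩
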